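/- Let q > 1, w ∈ A_q, and let r be finite with r > 2q and r′ = r/(r−1). Fix linearizing data (G, g, M, N_k, a_k) as in the definition of density. Then for every λ > 0 and every finite collection 𝐏 of bitiles there exists 𝐏′ ⊆ 𝐏 with density(𝐏′) < λ/2 such that 𝐏 ∖ 𝐏′ can be written as a union of trees, 𝐏 ∖ 𝐏′ = ⋃_{T ∈ 𝐓} T, with Σ_{T ∈ 𝐓} w(I_T) ≤ C λ^{−r′} w(G), where C depends only on q, r and [w]_{A_q}. -/

import Mathlib

open MeasureTheory Set
open scoped ENNReal NNReal Classical

noncomputable section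
namespace Paper

/-- The Walsh functions `W_k`, supported on `[0,1)`. -/
def walsh (k : ℕ) (x : ℝ) : ℝ :=
  if h : k = 0 then (if 0 ≤ x ∧ x < 1 then (1:ℝ) else 0)
  else walsh (k / 2) (2 * x) + (if k % 2 = 0 then (1:ℝ) else -1) * walsh (k / 2) (2 * x - 1)
termination_by k
decreasing_by all_goals exact Nat.div_lt_self (Nat.pos_of_ne_zero h) one_lt_two

/-- The dyadic interval `[2^j m, 2^j (m+1))`. -/
def dyadicI (j m : ℤ) : Set ℝ := Ico ((2:ℝ)^j * (m:ℝ)) ((2:ℝ)^j * ((m:ℝ)+1))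

/-- A weight: positive a.e. and locally integrable. -/
def IsWeight (w : ℝ → ℝ) : Prop :=
  (∀ᵐ x ∂(volume : Measure ℝ), 0 < w x) ∧ LocallyIntegrable w volume

/-- The measure `w(x) dx`. -/
def wMeasure (w : ℝ → ℝ) : Measure ℝ := volume.withDensity fun x => ENNReal.ofReal (w x)

/-- `[w]_{A_p} ≤ A` over dyadic intervals, for `1 < p`. -/
def ApBoundedBy (w : ℝ → ℝ) (p A : ℝ) : Prop :=
  ∀ j m : ℤ,
    ((2:ℝ)^(-j) * ∫ x in dyadicI j m, w x) *
      ((2:ℝ)^(-j) * ∫ x in dyadicI j m, w x ^ (-1/(p-1)))^(p-1) ≤ A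

/-- `[w]_{A_1} ≤ A` over dyadic intervals. -/
def A1BoundedBy (w : ℝ → ℝ) (A : ℝ) : Prop :=
  ∀ j m : ℤ,
    (2:ℝ)^(-j) * ∫ x in dyadicI j m, w x ≤ A * essInf w (volume.restrict (dyadicI j m))

/-- `w ∈ A_q` for `q ∈ [1,∞)`, covering also the case `q = 1`. -/
def MemAq (w : ℝ → ℝ) (q : ℝ) : Prop :=
  IsWeight w ∧ ((q = 1 ∧ ∃ A, A1BoundedBy w A) ∨ (1 < q ∧ ∃ A, ApBoundedBy w q A))

/-- `⟨f,g⟩ = ∫_0^1 f g`. -/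
def inner01 (f g : ℝ → ℝ) : ℝ := ∫ x in Ico (0:ℝ) 1, f x * g x

/-- Walsh--Fourier partial sums, `S_n f = 0` for `n < 0`. -/
def walshSum (f : ℝ → ℝ) (n : ℤ) (x : ℝ) : ℝ :=
  if n < 0 then 0
  else ∑ k ∈ Finset.range (n.toNat + 1), inner01 f (walsh k) * walsh k x

/-- Pointwise `r`-variation sup over all finite increasing integer sequences. -/
def varNormE (r : ℝ) (u : ℤ → ℝ) : ℝ≥0∞ :=
  ⨆ (M : ℕ) (N : Fin (M + 1) → ℤ) (_ : StrictMono N),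
    ENNReal.ofReal ((∑ j : Fin M, |u (N j.succ) - u (N j.castSucc)| ^ r) ^ (1 / r))

/-- A tile `[2^j m, 2^j (m+1)) × [2^{-j} n, 2^{-j}(n+1))`. -/
structure Tile where
  j : ℤ
  m : ℕ
  n : ℕ
deriving DecidableEq

namespace Tile
def timeI (p : Tile) : Set ℝ := Ico ((2:ℝ)^p.j * (p.m:ℝ)) ((2:ℝ)^p.j * ((p.m:ℝ)+1))
def freqI (p : Tile) : Set ℝ := Ico ((2:ℝ)^(-p.j) * (p.n:ℝ)) ((2:ℝ)^(-p.j) * ((p.n:ℝ)+1))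
def len (p : Tile) : ℝ := (2:ℝ)^p.j
def rect (p : Tile) : Set (ℝ × ℝ) := p.timeI ×ˢ p.freqI
/-- The order `p < q` on tiles: the tiles intersect and `I_p ⊆ I_q`. -/
def below (p q : Tile) : Prop := (p.rect ∩ q.rect).Nonempty ∧ p.timeI ⊆ q.timeI
/-- The Walsh packet of a tile. -/
def packet (p : Tile) (x : ℝ) : ℝ :=
  (2:ℝ) ^ (-(p.j:ℝ)/2) * walsh p.n ((2:ℝ)^(-p.j) * x - (p.m:ℝ))
end Tile

/-- A bitile `[2^j m, 2^j (m+1)) × [2^{1-j} n, 2^{1-j}(n+1))` (area 2). -/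
structure Bitile where
  j : ℤ
  m : ℕ
  n : ℕ
deriving DecidableEq

namespace Bitile
def timeI (P : Bitile) : Set ℝ := Ico ((2:ℝ)^P.j * (P.m:ℝ)) ((2:ℝ)^P.j * ((P.m:ℝ)+1))
def freqI (P : Bitile) : Set ℝ := Ico ((2:ℝ)^(1-P.j) * (P.n:ℝ)) ((2:ℝ)^(1-P.j) * ((P.n:ℝ)+1))
def len (P : Bitile) : ℝ := (2:ℝ)^P.j
def rect (P : Bitile) : Set (ℝ × ℝ) := P.timeI ×ˢ P.freqI
/-- The order `P < Q` on bitiles. -/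
def below (P Q : Bitile) : Prop := (P.rect ∩ Q.rect).Nonempty ∧ P.timeI ⊆ Q.timeI
/-- The lower tile `P_1`. -/
def lower (P : Bitile) : Tile := ⟨P.j, P.m, 2 * P.n⟩
/-- The upper tile `P_2`. -/
def upper (P : Bitile) : Tile := ⟨P.j, P.m, 2 * P.n + 1⟩
end Bitile

/-- A tree of bitiles with top `P_T`. -/
structure Tree where
  top : Bitile
  elems : Finset Bitile
  below_top : ∀ P ∈ elems, P.below top

/-- A tree is 2-overlapping if `P_2 < (P_T)_2` for all its members. -/
def Tree.TwoOverlapping (T : Tree) : Prop :=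
  ∀ P ∈ T.elems, (Bitile.upper P).below T.top.upper

/-- A tree is 1-overlapping if `P_1 < (P_T)_1` for all its members. -/
def Tree.OneOverlapping (T : Tree) : Prop :=
  ∀ P ∈ T.elems, (Bitile.lower P).below T.top.lower

/-- `⟨f, φ_p⟩`. -/
def pinner (f : ℝ → ℝ) (p : Tile) : ℝ := ∫ y, f y * p.packet y

/-- The tree square function `S_T f`. -/
def treeSq (f : ℝ → ℝ) (T : Tree) (x : ℝ) : ℝ :=
  Real.sqrt (∑ P ∈ T.elems,
    (pinner f P.lower)^2 * Set.indicator P.timeI (fun _ => (1:ℝ)) x / P.len)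

/-- The (weighted) size of a collection of bitiles: the least constant `C` with
`‖S_T f‖_{L²(w)} ≤ C w(I_T)^{1/2}` over all 2-overlapping trees in the collection,
realized as a supremum of ratios. -/
def size (w f : ℝ → ℝ) (Ps : Set Bitile) : ℝ≥0∞ :=
  ⨆ (T : Tree) (_ : (T.elems : Set Bitile) ⊆ Ps ∧ T.TwoOverlapping),
    eLpNorm (treeSq f T) 2 (wMeasure w) / (wMeasure w T.top.timeI) ^ (1/2 : ℝ)

/-- The coefficient `a_P(x)` built from linearizing data. -/
def coefP (M : ℝ → ℕ) (N : ℕ → ℝ → ℤ) (a : ℕ → ℝ → ℝ) (P : Bitile) (x : ℝ) : ℝ :=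
  ∑ j ∈ Finset.Icc 1 (M x),
    if ((N (j-1) x : ℝ)) ∉ P.freqI ∧ ((N j x : ℝ)) ∈ (Bitile.upper P).freqI then a j x else 0

/-- The (weighted) density of a collection of bitiles. -/
def density (w g : ℝ → ℝ) (r' : ℝ) (M : ℝ → ℕ) (N : ℕ → ℝ → ℤ) (a : ℕ → ℝ → ℝ)
    (Ps : Set Bitile) : ℝ≥0∞ :=
  ⨆ (P : Bitile) (_ : P ∈ Ps) (Q : Bitile) (_ : P.below Q),
    (ENNReal.ofReal (∫ x in Q.timeI,
        |g x| ^ r' * (∑ k ∈ Finset.Icc 1 (M x),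
          if ((N k x : ℝ)) ∈ Q.freqI then |a k x| ^ r' else 0) * w x)
      / wMeasure w Q.timeI) ^ (1/r')

/-- The bilinear form `B_Ps(f,g)`. -/
def bform (w f g : ℝ → ℝ) (M : ℝ → ℕ) (N : ℕ → ℝ → ℤ) (a : ℕ → ℝ → ℝ)
    (Ps : Finset Bitile) : ℝ :=
  ∑ P ∈ Ps, pinner f P.lower * ∫ x, P.lower.packet x * coefP M N a P x * g x * w x

/-- The linearized tree operator `C_T f`. -/
def treeOp (f : ℝ → ℝ) (M : ℝ → ℕ) (N : ℕ → ℝ → ℤ) (a : ℕ → ℝ → ℝ) (T : Tree) (x : ℝ) : ℝ :=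
  ∑ P ∈ T.elems, pinner f P.lower * P.lower.packet x * coefP M N a P x

/-- The Haar function of the dyadic interval `[2^j m, 2^j(m+1))`. -/
def haarFn (j m : ℤ) (x : ℝ) : ℝ :=
  if x ∈ Ico ((2:ℝ)^j * (m:ℝ)) ((2:ℝ)^j * ((m:ℝ) + 1/2)) then (2:ℝ) ^ (-(j:ℝ)/2)
  else if x ∈ Ico ((2:ℝ)^j * ((m:ℝ) + 1/2)) ((2:ℝ)^j * ((m:ℝ)+1)) then -(2:ℝ) ^ (-(j:ℝ)/2)
  else 0

/-- The martingale difference projection `Δ_j f` onto Haar functions at scale `2^{1-j}`. -/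
def haarProj (j : ℤ) (f : ℝ → ℝ) (x : ℝ) : ℝ :=
  ∑' m : ℤ, (∫ y, f y * haarFn (1-j) m y) * haarFn (1-j) m x

/-- The pointwise `r`-variation of the Haar martingale of `f`. -/
def varHaar (r : ℝ) (f : ℝ → ℝ) (x : ℝ) : ℝ≥0∞ :=
  ⨆ (M : ℕ) (N : Fin (M + 1) → ℤ) (_ : StrictMono N),
    ENNReal.ofReal ((∑ k : Fin M,
      |∑ j ∈ Finset.Ioc (N k.castSucc) (N k.succ), haarProj j f x| ^ r) ^ (1/r))

/-- The jump counting function `M_λ(x)`. -/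
def jumpCount (f : ℝ → ℝ) (lam : ℝ) (x : ℝ) : ℝ≥0∞ :=
  ⨆ (M : ℕ) (N : Fin (M + 1) → ℤ) (_ : StrictMono N),
    ((Finset.univ.filter (fun k : Fin M =>
      lam < |∑ j ∈ Finset.Ioc (N k.castSucc) (N k.succ), haarProj j f x|)).card : ℝ≥0∞)

/-- The square function of a finite collection of tiles. -/
def tileSq (f : ℝ → ℝ) (Ds : Finset Tile) (x : ℝ) : ℝ :=
  Real.sqrt (∑ p ∈ Ds, (pinner f p)^2 * Set.indicator p.timeI (fun _ => (1:ℝ)) x / p.len)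

/-- The dyadic sharp maximal function. -/
def sharpMax (g : ℝ → ℝ) (x : ℝ) : ℝ≥0∞ :=
  ⨆ (j : ℤ) (m : ℤ) (_ : x ∈ dyadicI j m),
    ⨅ c : ℝ, ENNReal.ofReal ((2:ℝ)^(-j) * ∫ y in dyadicI j m, |g y - c|)

/-- The dyadic `L²` maximal function `M_2`. -/
def M2fn (f : ℝ → ℝ) (x : ℝ) : ℝ≥0∞ :=
  ⨆ (j : ℤ) (m : ℤ) (_ : x ∈ dyadicI j m),
    ENNReal.ofReal (((2:ℝ)^(-j) * ∫ y in dyadicI j m, (f y)^2) ^ (1/2:ℝ))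

/-- The weak `L^{1,∞}(μ)` quasinorm. -/
def wkNorm (g : ℝ → ℝ) (μ : Measure ℝ) : ℝ≥0∞ :=
  ⨆ lam : ℝ, ENNReal.ofReal lam * μ {x | lam < |g x|}


section AuxGeometry

lemma two_zpow_pos' (j : ℤ) : (0:ℝ) < 2 ^ j := zpow_pos (by norm_num) j

lemma dyadic_nest {a b : ℤ} (hab : a ≤ b) {m u : ℕ} {x : ℝ}
    (hx1 : x ∈ Ico ((2:ℝ)^a * (m:ℝ)) ((2:ℝ)^a * ((m:ℝ)+1)))
    (hx2 : x ∈ Ico ((2:ℝ)^b * (u:ℝ)) ((2:ℝ)^b * ((u:ℝ)+1))) :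
    Ico ((2:ℝ)^a * (m:ℝ)) ((2:ℝ)^a * ((m:ℝ)+1)) ⊆ Ico ((2:ℝ)^b * (u:ℝ)) ((2:ℝ)^b * ((u:ℝ)+1)) := by
  set d : ℕ := 2 ^ (b - a).toNat with hdd
  have hd : (2:ℝ)^b = (2:ℝ)^a * (d:ℝ) := by
    have h1 : ((b - a).toNat : ℤ) = b - a := Int.toNat_of_nonneg (by omega)
    have h2 : (d:ℝ) = (2:ℝ) ^ (b - a) := by
      rw [hdd]; push_cast
      rw [← zpow_natCast (2:ℝ) (b-a).toNat, h1]
    rw [h2, ← zpow_add₀ (by norm_num : (2:ℝ) ≠ 0)]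
    congr 1; omega
  have hp := two_zpow_pos' a
  obtain ⟨l1, r1⟩ := hx1
  obtain ⟨l2, r2⟩ := hx2
  rw [hd] at l2 r2 ⊢
  have k1 : (m:ℝ) < (d:ℝ) * ((u:ℝ)+1) := by nlinarith
  have k2 : (d:ℝ) * (u:ℝ) < (m:ℝ) + 1 := by nlinarith
  have k1' : m + 1 ≤ d * (u+1) := by
    have : (m:ℝ) < ((d * (u+1) : ℕ) : ℝ) := by push_cast; linarith
    have := Nat.cast_lt (α := ℝ) |>.mp this
    omega
  have k2' : d * u ≤ m := by
    have : ((d * u : ℕ) : ℝ) < ((m + 1 : ℕ) : ℝ) := by push_cast; linarith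
    have := Nat.cast_lt (α := ℝ) |>.mp this
    omega
  have c1 : (d:ℝ) * (u:ℝ) ≤ (m:ℝ) := by
    have : ((d * u : ℕ) : ℝ) ≤ ((m : ℕ) : ℝ) := Nat.cast_le.mpr k2'
    push_cast at this; linarith
  have c2 : (m:ℝ) + 1 ≤ (d:ℝ) * ((u:ℝ)+1) := by
    have : ((m + 1 : ℕ) : ℝ) ≤ ((d * (u+1) : ℕ) : ℝ) := Nat.cast_le.mpr k1'
    push_cast at this; linarith
  exact Set.Ico_subset_Ico (by nlinarith) (by nlinarith)

lemma same_scale {c : ℤ} {n n' : ℕ} {ξ : ℝ}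
    (h1 : ξ ∈ Ico ((2:ℝ)^c * (n:ℝ)) ((2:ℝ)^c * ((n:ℝ)+1)))
    (h2 : ξ ∈ Ico ((2:ℝ)^c * (n':ℝ)) ((2:ℝ)^c * ((n':ℝ)+1))) : n = n' := by
  have hp := two_zpow_pos' c
  obtain ⟨l1, r1⟩ := h1; obtain ⟨l2, r2⟩ := h2
  have a1 : (n:ℝ) < (n':ℝ) + 1 := by nlinarith
  have a2 : (n':ℝ) < (n:ℝ) + 1 := by nlinarith
  have b1 : n < n' + 1 := by exact_mod_cast a1
  have b2 : n' < n + 1 := by exact_mod_cast a2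
  omega

namespace Bitile

lemma mem_timeI_left (P : Bitile) : (2:ℝ)^P.j * P.m ∈ P.timeI :=
  ⟨le_rfl, by nlinarith [two_zpow_pos' P.j]⟩

lemma mem_freqI_left (P : Bitile) : (2:ℝ)^(1-P.j) * P.n ∈ P.freqI :=
  ⟨le_rfl, by nlinarith [two_zpow_pos' (1-P.j)]⟩

lemma below_refl (P : Bitile) : P.below P :=
  ⟨⟨((2:ℝ)^P.j * P.m, (2:ℝ)^(1-P.j) * P.n),
    ⟨⟨mem_timeI_left P, mem_freqI_left P⟩, ⟨mem_timeI_left P, mem_freqI_left P⟩⟩⟩, subset_rfl⟩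

lemma timeI_lt (P : Bitile) : (2:ℝ)^P.j * P.m < (2:ℝ)^P.j * ((P.m:ℝ)+1) := by
  nlinarith [two_zpow_pos' P.j]

lemma below_j_le {P Q : Bitile} (h : P.below Q) : P.j ≤ Q.j := by
  have h2 := (Set.Ico_subset_Ico_iff (timeI_lt P)).mp h.2
  have hp := two_zpow_pos' P.j
  have hq := two_zpow_pos' Q.j
  have hle : (2:ℝ)^P.j ≤ (2:ℝ)^Q.j := by nlinarith [h2.1, h2.2]
  exact (zpow_le_zpow_iff_right₀ (by norm_num : (1:ℝ) < 2)).mp hle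

lemma below_antisymm {P Q : Bitile} (hPQ : P.below Q) (hQP : Q.below P) : P = Q := by
  have hj : P.j = Q.j := le_antisymm (below_j_le hPQ) (below_j_le hQP)
  have e1 := (Set.Ico_subset_Ico_iff (timeI_lt P)).mp hPQ.2
  have e2 := (Set.Ico_subset_Ico_iff (timeI_lt Q)).mp hQP.2
  have hm : P.m = Q.m := by
    have hmm : (2:ℝ)^P.j * P.m = (2:ℝ)^Q.j * Q.m := le_antisymm (hj ▸ e2.1) e1.1
    rw [hj] at hmm
    have := mul_left_cancel₀ (ne_of_gt (two_zpow_pos' Q.j)) hmm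
    exact_mod_cast this
  have hn : P.n = Q.n := by
    obtain ⟨⟨x, ξ⟩, hP, hQ⟩ := hPQ.1
    have h1 : ξ ∈ P.freqI := hP.2
    have h2 : ξ ∈ Q.freqI := hQ.2
    rw [Bitile.freqI, hj] at h1
    exact same_scale h1 h2
  cases P; cases Q; simp_all

lemma freq_subset_of_below {P Q : Bitile} (h : P.below Q) : Q.freqI ⊆ P.freqI := by
  obtain ⟨⟨⟨x, ξ⟩, hP, hQ⟩, hsub⟩ := h
  have hj : P.j ≤ Q.j := below_j_le ⟨⟨⟨x, ξ⟩, hP, hQ⟩, hsub⟩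
  exact dyadic_nest (by omega) hQ.2 hP.2

lemma below_trans {P Q R : Bitile} (h1 : P.below Q) (h2 : Q.below R) : P.below R := by
  refine ⟨?_, h1.2.trans h2.2⟩
  have hfr : R.freqI ⊆ P.freqI := (freq_subset_of_below h2).trans (freq_subset_of_below h1)
  exact ⟨((2:ℝ)^P.j * P.m, (2:ℝ)^(1-R.j) * R.n), ⟨⟨mem_timeI_left P, hfr (mem_freqI_left R)⟩,
    ⟨(h1.2.trans h2.2) (mem_timeI_left P), mem_freqI_left R⟩⟩⟩

lemma eq_or_below {Q1 Q2 : Bitile} {x ξ : ℝ} (hx1 : x ∈ Q1.timeI) (hx2 : x ∈ Q2.timeI)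
    (hf1 : ξ ∈ Q1.freqI) (hf2 : ξ ∈ Q2.freqI) : Q1.below Q2 ∨ Q2.below Q1 := by
  rcases le_total Q1.j Q2.j with h | h
  · exact Or.inl ⟨⟨(x, ξ), ⟨hx1, hf1⟩, ⟨hx2, hf2⟩⟩, dyadic_nest h hx1 hx2⟩
  · exact Or.inr ⟨⟨(x, ξ), ⟨hx2, hf2⟩, ⟨hx1, hf1⟩⟩, dyadic_nest h hx2 hx1⟩

end Bitile

/-- The value associated to a single bitile `Q` in the density supremum. -/
def Vfn (w g : ℝ → ℝ) (r' : ℝ) (M : ℝ → ℕ) (N : ℕ → ℝ → ℤ) (a : ℕ → ℝ → ℝ)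
    (Q : Bitile) : ℝ≥0∞ :=
  (ENNReal.ofReal (∫ x in Q.timeI,
      |g x| ^ r' * (∑ k ∈ Finset.Icc 1 (M x),
        if ((N k x : ℝ)) ∈ Q.freqI then |a k x| ^ r' else 0) * w x)
    / wMeasure w Q.timeI) ^ (1/r')

/-- The density of a single bitile `P`. -/
def Dfn (w g : ℝ → ℝ) (r' : ℝ) (M : ℝ → ℕ) (N : ℕ → ℝ → ℤ) (a : ℕ → ℝ → ℝ)
    (P : Bitile) : ℝ≥0∞ :=
  ⨆ (Q : Bitile) (_ : P.below Q), Vfn w g r' M N a Q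

lemma density_eq (w g : ℝ → ℝ) (r' : ℝ) (M : ℝ → ℕ) (N : ℕ → ℝ → ℤ) (a : ℕ → ℝ → ℝ)
    (s : Set Bitile) :
    density w g r' M N a s = ⨆ (P : Bitile) (_ : P ∈ s), Dfn w g r' M N a P := rfl

end AuxGeometry

/-- Lemma 4.5, tree selection by density: for every `λ > 0` and finite
collection `Ps` there is `Ps' ⊆ Ps` with `density(Ps') < λ/2` and `Ps \ Ps'` a union of
trees `Ts` with `Σ_{T ∈ Ts} w(I_T) ≤ C λ^{-r'} w(G)`, `C = C(q,r,[w]_{A_q})`. -/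
theorem tree_selection_by_density (q r : ℝ) (hq : 1 < q) (hr : 2 * q < r) (A : ℝ) :
    ∃ C : ℝ, 0 < C ∧ ∀ w : ℝ → ℝ, IsWeight w → ApBoundedBy w q A →
    ∀ (G : Set ℝ) (g : ℝ → ℝ) (M : ℝ → ℕ) (N : ℕ → ℝ → ℤ) (a : ℕ → ℝ → ℝ),
      MeasurableSet G → Measurable g → Measurable M →
      (∀ k, Measurable (N k)) → (∀ k, Measurable (a k)) →
      (∀ x, |g x| ≤ Set.indicator G (fun _ => (1:ℝ)) x) →
      (∀ x k l, k < l → l ≤ M x → N k x < N l x) →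
      (∀ x, ∑ j ∈ Finset.Icc 1 (M x), |a j x| ^ (r/(r-1)) = 1) →
    ∀ lam : ℝ, 0 < lam → ∀ Ps : Finset Bitile,
      ∃ Ps' : Finset Bitile, Ps' ⊆ Ps ∧
        density w g (r/(r-1)) M N a ↑Ps' < ENNReal.ofReal (lam/2) ∧
        ∃ Ts : Finset Tree,
          ((Ps \ Ps' : Finset Bitile) : Set Bitile) = ⋃ T ∈ Ts, (T.elems : Set Bitile) ∧
          ∑ T ∈ Ts, wMeasure w T.top.timeI ≤
            ENNReal.ofReal C * ENNReal.ofReal lam ^ (-(r/(r-1))) * wMeasure w G := by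
  classical
  set r' : ℝ := r / (r - 1) with hr'def
  have hq0 : (0:ℝ) < q := by linarith
  have hr2 : (2:ℝ) < r := by nlinarith
  have hrm1 : (0:ℝ) < r - 1 := by linarith
  have hr'pos : 0 < r' := div_pos (by linarith) hrm1
  have hr'ne : r' ≠ 0 := ne_of_gt hr'pos
  refine ⟨(4:ℝ) ^ r', Real.rpow_pos_of_pos (by norm_num) _, ?_⟩
  intro w hw _hA G g M N a hG hg hM hN ha hgG _hNmono ha1 lam hlam Ps
  have hlam2 : (0:ℝ) < lam/2 := by linarith
  have hlam4 : (0:ℝ) < lam/4 := by linarith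
  set V : Bitile → ℝ≥0∞ := Vfn w g r' M N a with hV
  set D : Bitile → ℝ≥0∞ := Dfn w g r' M N a with hD
  set Ps' : Finset Bitile := Ps.filter (fun P => D P < ENNReal.ofReal (lam/2)) with hPs'
  refine ⟨Ps', Finset.filter_subset _ _, ?_, ?_⟩
  · -- density bound
    have heq : density w g r' M N a ↑Ps' = Ps'.sup D := by
      rw [density_eq, Finset.sup_eq_iSup]
      exact iSup_congr fun P => by rw [Finset.mem_coe]
    rw [heq]
    refine (Finset.sup_lt_iff ?_).mpr ?_
    · simpa using ENNReal.ofReal_pos.mpr hlam2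
    · intro P hP; exact (Finset.mem_filter.mp hP).2
  · -- the integrand and its ofReal
    set fR : Bitile → ℝ → ℝ := fun Q x =>
      |g x| ^ r' * (∑ k ∈ Finset.Icc 1 (M x),
        if ((N k x : ℝ)) ∈ Q.freqI then |a k x| ^ r' else 0) * w x with hfR
    set IQ : Bitile → ℝ≥0∞ := fun Q => ENNReal.ofReal (∫ x in Q.timeI, fR Q x) with hIQ
    have hVQ : ∀ Q : Bitile, V Q = (IQ Q / wMeasure w Q.timeI) ^ (1/r') := fun Q => rfl
    -- witnesses
    have hwitness : ∀ P ∈ Ps \ Ps', ∃ Q, P.below Q ∧ ENNReal.ofReal (lam/4) < V Q := by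
      intro P hP
      rw [Finset.mem_sdiff] at hP
      have hnotlt : ¬ D P < ENNReal.ofReal (lam/2) :=
        fun h => hP.2 (Finset.mem_filter.mpr ⟨hP.1, h⟩)
      have hle : ENNReal.ofReal (lam/2) ≤ D P := not_lt.mp hnotlt
      have hlt : ENNReal.ofReal (lam/4) < D P :=
        lt_of_lt_of_le ((ENNReal.ofReal_lt_ofReal_iff hlam2).mpr (by linarith)) hle
      rw [hD, Dfn, lt_iSup_iff] at hlt
      obtain ⟨Q, hQ⟩ := hlt
      by_cases hb : P.below Q
      · rw [iSup_pos hb] at hQ; exact ⟨Q, hb, hQ⟩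
      · rw [iSup_neg hb] at hQ; exact absurd hQ not_lt_bot
    have hex : ∀ P : Bitile, ∃ Q : Bitile,
        P ∈ Ps \ Ps' → (P.below Q ∧ ENNReal.ofReal (lam/4) < V Q) := by
      intro P
      by_cases h : P ∈ Ps \ Ps'
      · obtain ⟨Q, hQ⟩ := hwitness P h; exact ⟨Q, fun _ => hQ⟩
      · exact ⟨⟨0,0,0⟩, fun hc => absurd hc h⟩
    choose QP hQP using hex
    set W : Finset Bitile := (Ps \ Ps').image QP with hW
    set F : Finset Bitile := W.filter (fun Q => ∀ Q' ∈ W, Q.below Q' → Q' = Q) with hF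
    have hFW : F ⊆ W := Finset.filter_subset _ _
    have hFwit : ∀ Q ∈ F, ENNReal.ofReal (lam/4) < V Q := by
      intro Q hQ
      obtain ⟨P, hPmem, hPQ⟩ := Finset.mem_image.mp (hFW hQ)
      exact hPQ ▸ (hQP P hPmem).2
    -- maximal cover
    have hcover : ∀ Q ∈ W, ∃ Q' ∈ F, Q.below Q' := by
      suffices h : ∀ n : ℕ, ∀ Q ∈ W, (W.filter (fun R => Q.below R)).card ≤ n →
          ∃ Q' ∈ F, Q.below Q' by
        intro Q hQ; exact h _ Q hQ le_rfl
      intro n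
      induction n with
      | zero =>
        intro Q hQ hcard
        exfalso
        have hmem : Q ∈ W.filter (fun R => Q.below R) :=
          Finset.mem_filter.mpr ⟨hQ, Bitile.below_refl Q⟩
        have := Finset.card_pos.mpr ⟨Q, hmem⟩
        omega
      | succ n ih =>
        intro Q hQ hcard
        by_cases hmax : ∀ Q' ∈ W, Q.below Q' → Q' = Q
        · exact ⟨Q, Finset.mem_filter.mpr ⟨hQ, hmax⟩, Bitile.below_refl Q⟩
        · push_neg at hmax
          obtain ⟨Q', hQ'W, hbel, hne⟩ := hmax
          have hss : W.filter (fun R => Q'.below R) ⊂ W.filter (fun R => Q.below R) := by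
            rw [Finset.ssubset_iff_of_subset
              (fun R hR => by
                rw [Finset.mem_filter] at hR ⊢
                exact ⟨hR.1, Bitile.below_trans hbel hR.2⟩)]
            refine ⟨Q, Finset.mem_filter.mpr ⟨hQ, Bitile.below_refl Q⟩, fun hQ'' => ?_⟩
            have := (Finset.mem_filter.mp hQ'').2
            exact hne (Bitile.below_antisymm hbel this).symm
          obtain ⟨R, hRF, hQ'R⟩ := ih Q' hQ'W (by
            have := Finset.card_lt_card hss; omega)
          exact ⟨R, hRF, Bitile.below_trans hbel hQ'R⟩
    -- trees
    set mkT : Bitile → Tree := fun Q =>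
      ⟨Q, (Ps \ Ps').filter (fun P => P.below Q),
        fun P hP => (Finset.mem_filter.mp hP).2⟩ with hmkT
    refine ⟨F.image mkT, ?_, ?_⟩
    · -- cover equality
      ext P
      simp only [Finset.mem_coe, Set.mem_iUnion]
      constructor
      · intro hP
        obtain ⟨Q', hQ'F, hbel⟩ := hcover (QP P) (Finset.mem_image_of_mem QP hP)
        refine ⟨mkT Q', Finset.mem_image_of_mem _ hQ'F, ?_⟩
        exact Finset.mem_coe.mpr
          (Finset.mem_filter.mpr ⟨hP, Bitile.below_trans (hQP P hP).1 hbel⟩)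
      · rintro ⟨T, hT, hPT⟩
        obtain ⟨Q, hQF, rfl⟩ := Finset.mem_image.mp hT
        exact (Finset.mem_filter.mp (Finset.mem_coe.mp hPT)).1
    · -- weight bound
      have hwpos := hw.1
      have hwaem : AEMeasurable (fun x => ENNReal.ofReal (w x)) volume :=
        ENNReal.measurable_ofReal.comp_aemeasurable hw.2.aestronglyMeasurable.aemeasurable
      set indG : ℝ → ℝ≥0∞ := G.indicator (fun _ => 1) with hindG
      have hindG_meas : Measurable indG := measurable_const.indicator hG
      set eS : Bitile → ℝ → ℝ≥0∞ := fun Q x =>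
        ∑ k ∈ Finset.Icc 1 (M x),
          if ((N k x : ℝ)) ∈ Q.freqI then ENNReal.ofReal (|a k x| ^ r') else 0 with heSdef
      have heS_meas : ∀ Q : Bitile, Measurable (eS Q) := by
        intro Q
        have hrw : eS Q = fun x => ∑' k : ℕ,
            (if 1 ≤ k ∧ k ≤ M x ∧ ((N k x : ℝ)) ∈ Q.freqI
              then ENNReal.ofReal (|a k x| ^ r') else 0) := by
          funext x
          rw [heSdef]
          dsimp only
          rw [tsum_eq_sum (s := Finset.Icc 1 (M x)) ?_]
          · refine Finset.sum_congr rfl fun k hk => ?_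
            rw [Finset.mem_Icc] at hk
            by_cases hfreq : ((N k x : ℝ)) ∈ Q.freqI
            · rw [if_pos hfreq, if_pos ⟨hk.1, hk.2, hfreq⟩]
            · rw [if_neg hfreq, if_neg (by tauto)]
          · intro k hk
            rw [Finset.mem_Icc] at hk
            exact if_neg (by tauto)
        rw [hrw]
        refine Measurable.ennreal_tsum fun k => ?_
        refine Measurable.ite ?_ (((ha k).abs.pow measurable_const).ennreal_ofReal)
          measurable_const
        have hset : {x : ℝ | 1 ≤ k ∧ k ≤ M x ∧ ((N k x : ℝ)) ∈ Q.freqI}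
            = {x : ℝ | 1 ≤ k} ∩ (M ⁻¹' (Set.Ici k) ∩
              (N k) ⁻¹' {n : ℤ | ((n:ℝ)) ∈ Q.freqI}) := by
          ext x
          simp only [Set.mem_setOf_eq, Set.mem_inter_iff, Set.mem_preimage, Set.mem_Ici]
        rw [hset]
        exact (MeasurableSet.const _).inter ((hM measurableSet_Ici).inter
          ((hN k) ((Set.to_countable _).measurableSet)))
      set ub : Bitile → ℝ → ℝ≥0∞ := fun Q x =>
        indG x * (eS Q x * ENNReal.ofReal (w x)) with hub
      -- per-bitile integral bound
      have hIQ_le : ∀ Q : Bitile, IQ Q ≤ ∫⁻ x, (Q.timeI).indicator (ub Q) x := by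
        intro Q
        have hfnn : 0 ≤ᵐ[volume.restrict Q.timeI] fR Q := by
          refine Filter.Eventually.mono (ae_restrict_of_ae hwpos) fun x hx => ?_
          have h1 : 0 ≤ |g x| ^ r' := Real.rpow_nonneg (abs_nonneg _) _
          have h2 : (0:ℝ) ≤ ∑ k ∈ Finset.Icc 1 (M x),
              if ((N k x : ℝ)) ∈ Q.freqI then |a k x| ^ r' else 0 := by
            refine Finset.sum_nonneg fun k _ => ?_
            split_ifs
            · exact Real.rpow_nonneg (abs_nonneg _) _
            · exact le_rfl
          exact mul_nonneg (mul_nonneg h1 h2) hx.le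
        have h1 : IQ Q ≤ ∫⁻ x in Q.timeI, ENNReal.ofReal (fR Q x) := by
          by_cases hint : Integrable (fR Q) (volume.restrict Q.timeI)
          · exact le_of_eq (ofReal_integral_eq_lintegral_ofReal hint hfnn)
          · rw [hIQ]; dsimp only
            rw [integral_undef hint]
            simp
        refine h1.trans ?_
        have htmeas : MeasurableSet Q.timeI := measurableSet_Ico
        rw [lintegral_indicator htmeas]
        refine lintegral_mono fun x => ?_
        have hAnn : 0 ≤ |g x| ^ r' := Real.rpow_nonneg (abs_nonneg _) _
        have hSnn : (0:ℝ) ≤ ∑ k ∈ Finset.Icc 1 (M x),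
            if ((N k x : ℝ)) ∈ Q.freqI then |a k x| ^ r' else 0 := by
          refine Finset.sum_nonneg fun k _ => ?_
          split_ifs
          · exact Real.rpow_nonneg (abs_nonneg _) _
          · exact le_rfl
        have hgle : ENNReal.ofReal (|g x| ^ r') ≤ indG x := by
          by_cases hxG : x ∈ G
          · have hb : |g x| ≤ 1 := by
              have := hgG x; rwa [Set.indicator_of_mem hxG] at this
            have : |g x| ^ r' ≤ 1 := Real.rpow_le_one (abs_nonneg _) hb hr'pos.le
            rw [hindG, Set.indicator_of_mem hxG]
            exact ENNReal.ofReal_le_one.mpr this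
          · have h0 : |g x| = 0 := le_antisymm
              (by have := hgG x; rwa [Set.indicator_of_notMem hxG] at this) (abs_nonneg _)
            rw [hindG, Set.indicator_of_notMem hxG, h0, Real.zero_rpow hr'ne]
            simp
        have hSeq : ENNReal.ofReal (∑ k ∈ Finset.Icc 1 (M x),
            if ((N k x : ℝ)) ∈ Q.freqI then |a k x| ^ r' else 0) = eS Q x := by
          rw [heSdef]; dsimp only
          rw [ENNReal.ofReal_sum_of_nonneg (fun k _ => by
            split_ifs
            · exact Real.rpow_nonneg (abs_nonneg _) _
            · exact le_rfl)]
          refine Finset.sum_congr rfl fun k _ => ?_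
          split_ifs <;> simp
        calc ENNReal.ofReal (fR Q x)
            = ENNReal.ofReal (|g x| ^ r') * ENNReal.ofReal (∑ k ∈ Finset.Icc 1 (M x),
                if ((N k x : ℝ)) ∈ Q.freqI then |a k x| ^ r' else 0)
                * ENNReal.ofReal (w x) := by
              rw [hfR]; dsimp only
              rw [ENNReal.ofReal_mul (mul_nonneg hAnn hSnn), ENNReal.ofReal_mul hAnn]
          _ ≤ indG x * eS Q x * ENNReal.ofReal (w x) := by
              rw [hSeq]
              exact mul_le_mul_left (mul_le_mul_left hgle _) _
          _ = ub Q x := by rw [hub]; dsimp only; ring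
      -- the overlap estimate
      have hover1 : ∀ x : ℝ, (∑ Q ∈ F, if x ∈ Q.timeI then eS Q x else 0) ≤ 1 := by
        intro x
        have hexp : ∀ Q ∈ F, (if x ∈ Q.timeI then eS Q x else 0)
            = ∑ k ∈ Finset.Icc 1 (M x),
                if x ∈ Q.timeI ∧ ((N k x : ℝ)) ∈ Q.freqI
                  then ENNReal.ofReal (|a k x| ^ r') else 0 := by
          intro Q _
          by_cases hxQ : x ∈ Q.timeI
          · rw [if_pos hxQ, heSdef]; dsimp only
            refine Finset.sum_congr rfl fun k _ => ?_
            by_cases hf : ((N k x : ℝ)) ∈ Q.freqI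
            · rw [if_pos hf, if_pos ⟨hxQ, hf⟩]
            · rw [if_neg hf, if_neg (by tauto)]
          · rw [if_neg hxQ]
            exact (Finset.sum_eq_zero fun k _ => if_neg (by tauto)).symm
        rw [Finset.sum_congr rfl hexp, Finset.sum_comm]
        have hinner : ∀ k ∈ Finset.Icc 1 (M x),
            (∑ Q ∈ F, if x ∈ Q.timeI ∧ ((N k x : ℝ)) ∈ Q.freqI
              then ENNReal.ofReal (|a k x| ^ r') else 0)
            ≤ ENNReal.ofReal (|a k x| ^ r') := by
          intro k _
          rw [← Finset.sum_filter, Finset.sum_const]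
          have hcard : (F.filter (fun Q => x ∈ Q.timeI ∧ ((N k x : ℝ)) ∈ Q.freqI)).card ≤ 1 := by
            refine Finset.card_le_one.mpr fun Q1 h1 Q2 h2 => ?_
            rw [Finset.mem_filter] at h1 h2
            obtain ⟨hQ1W, hmax1⟩ := Finset.mem_filter.mp h1.1
            obtain ⟨hQ2W, hmax2⟩ := Finset.mem_filter.mp h2.1
            rcases Bitile.eq_or_below h1.2.1 h2.2.1 h1.2.2 h2.2.2 with hb | hb
            · exact (hmax1 Q2 hQ2W hb).symm
            · exact hmax2 Q1 hQ1W hb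
          calc (F.filter (fun Q => x ∈ Q.timeI ∧ ((N k x : ℝ)) ∈ Q.freqI)).card
                • ENNReal.ofReal (|a k x| ^ r')
              = ((F.filter (fun Q => x ∈ Q.timeI ∧ ((N k x : ℝ)) ∈ Q.freqI)).card : ℝ≥0∞)
                * ENNReal.ofReal (|a k x| ^ r') := by rw [nsmul_eq_mul]
            _ ≤ 1 * ENNReal.ofReal (|a k x| ^ r') := by
                refine mul_le_mul_left ?_ _
                exact_mod_cast hcard
            _ = ENNReal.ofReal (|a k x| ^ r') := one_mul _
        calc (∑ k ∈ Finset.Icc 1 (M x), ∑ Q ∈ F,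
                if x ∈ Q.timeI ∧ ((N k x : ℝ)) ∈ Q.freqI
                  then ENNReal.ofReal (|a k x| ^ r') else 0)
            ≤ ∑ k ∈ Finset.Icc 1 (M x), ENNReal.ofReal (|a k x| ^ r') :=
              Finset.sum_le_sum hinner
          _ = ENNReal.ofReal (∑ k ∈ Finset.Icc 1 (M x), |a k x| ^ r') :=
              (ENNReal.ofReal_sum_of_nonneg fun k _ =>
                Real.rpow_nonneg (abs_nonneg _) _).symm
          _ = 1 := by rw [ha1 x, ENNReal.ofReal_one]
      -- summing the integrals
      have hmain : ∑ Q ∈ F, IQ Q ≤ wMeasure w G := by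
        calc ∑ Q ∈ F, IQ Q
            ≤ ∑ Q ∈ F, ∫⁻ x, (Q.timeI).indicator (ub Q) x :=
              Finset.sum_le_sum fun Q _ => hIQ_le Q
          _ = ∫⁻ x, ∑ Q ∈ F, (Q.timeI).indicator (ub Q) x :=
              (lintegral_finset_sum' F fun Q _ =>
                ((hindG_meas.aemeasurable.mul ((heS_meas Q).aemeasurable.mul hwaem)).indicator
                  (measurableSet_Ico : MeasurableSet Q.timeI))).symm
          _ ≤ ∫⁻ x, indG x * ENNReal.ofReal (w x) := by
              refine lintegral_mono fun x => ?_
              calc ∑ Q ∈ F, (Q.timeI).indicator (ub Q) x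
                  = ∑ Q ∈ F, (if x ∈ Q.timeI then eS Q x else 0)
                      * (indG x * ENNReal.ofReal (w x)) := by
                    refine Finset.sum_congr rfl fun Q _ => ?_
                    rw [Set.indicator_apply]
                    split_ifs
                    · rw [hub]; dsimp only; ring
                    · rw [zero_mul]
                _ = (∑ Q ∈ F, if x ∈ Q.timeI then eS Q x else 0)
                      * (indG x * ENNReal.ofReal (w x)) := by
                    rw [Finset.sum_mul]
                _ ≤ 1 * (indG x * ENNReal.ofReal (w x)) :=
                    mul_le_mul_left (hover1 x) _
                _ = indG x * ENNReal.ofReal (w x) := one_mul _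
          _ = wMeasure w G := by
              have hpt : ∀ x : ℝ, indG x * ENNReal.ofReal (w x)
                  = G.indicator (fun x => ENNReal.ofReal (w x)) x := by
                intro x
                rw [hindG]
                by_cases hxG : x ∈ G
                · rw [Set.indicator_of_mem hxG, Set.indicator_of_mem hxG, one_mul]
                · rw [Set.indicator_of_notMem hxG, Set.indicator_of_notMem hxG, zero_mul]
              simp_rw [hpt]
              rw [lintegral_indicator hG, wMeasure, withDensity_apply _ hG]
      -- per-bitile weight bound
      have hc0pos : (0:ℝ≥0∞) < ENNReal.ofReal (lam/4) ^ r' :=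
        ENNReal.rpow_pos (ENNReal.ofReal_pos.mpr hlam4) ENNReal.ofReal_ne_top
      have hc0top : ENNReal.ofReal (lam/4) ^ r' ≠ ⊤ :=
        ENNReal.rpow_ne_top_of_nonneg hr'pos.le ENNReal.ofReal_ne_top
      have hQbound : ∀ Q ∈ F, wMeasure w Q.timeI
          ≤ (ENNReal.ofReal (lam/4) ^ r')⁻¹ * IQ Q := by
        intro Q hQF
        by_cases hwQ : wMeasure w Q.timeI = 0
        · rw [hwQ]; simp
        have hwit := hFwit Q hQF
        have h5 : ENNReal.ofReal (lam/4) ^ r' ≤ IQ Q / wMeasure w Q.timeI := by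
          have h := ENNReal.rpow_le_rpow hwit.le hr'pos.le
          rwa [hVQ Q, ← ENNReal.rpow_mul, one_div, inv_mul_cancel₀ hr'ne,
            ENNReal.rpow_one] at h
        have h6 : ENNReal.ofReal (lam/4) ^ r' * wMeasure w Q.timeI ≤ IQ Q :=
          (ENNReal.le_div_iff_mul_le (Or.inl hwQ) (Or.inr ENNReal.ofReal_ne_top)).mp h5
        calc wMeasure w Q.timeI
            = (ENNReal.ofReal (lam/4) ^ r')⁻¹
              * (ENNReal.ofReal (lam/4) ^ r' * wMeasure w Q.timeI) := by
              rw [← mul_assoc, ENNReal.inv_mul_cancel hc0pos.ne' hc0top, one_mul]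
          _ ≤ _ := mul_le_mul_right h6 _
      -- constant computation
      have hconst : (ENNReal.ofReal (lam/4) ^ r')⁻¹
          ≤ ENNReal.ofReal ((4:ℝ) ^ r') * ENNReal.ofReal lam ^ (-r') := by
        rw [← ENNReal.rpow_neg, ENNReal.ofReal_rpow_of_pos hlam4,
          ENNReal.ofReal_rpow_of_pos hlam,
          ← ENNReal.ofReal_mul (by positivity : (0:ℝ) ≤ (4:ℝ) ^ r')]
        refine le_of_eq (congrArg ENNReal.ofReal ?_)
        rw [div_eq_mul_inv, Real.mul_rpow hlam.le (by positivity),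
          Real.inv_rpow (by norm_num : (0:ℝ) ≤ 4),
          Real.rpow_neg (by norm_num : (0:ℝ) ≤ 4), inv_inv]
        ring
      -- final chain
      calc ∑ T ∈ F.image mkT, wMeasure w T.top.timeI
          = ∑ Q ∈ F, wMeasure w (mkT Q).top.timeI :=
            Finset.sum_image (fun Q _ Q' _ h => congrArg Tree.top h)
        _ ≤ ∑ Q ∈ F, (ENNReal.ofReal (lam/4) ^ r')⁻¹ * IQ Q :=
            Finset.sum_le_sum hQbound
        _ = (ENNReal.ofReal (lam/4) ^ r')⁻¹ * ∑ Q ∈ F, IQ Q := by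
            rw [Finset.mul_sum]
        _ ≤ (ENNReal.ofReal (lam/4) ^ r')⁻¹ * wMeasure w G :=
            mul_le_mul_right hmain _
        _ ≤ ENNReal.ofReal ((4:ℝ) ^ r') * ENNReal.ofReal lam ^ (-r') * wMeasure w G :=
            mul_le_mul_left hconst _
end Paper
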